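/- Let 0 → L →α M →β N → 0 be a degreewise pure exact sequence of chain complexes of R-modules. Then: (a) L is pure-acyclic if and only if β is a pure quasi-isomorphism; (b) N is pure-acyclic if and only if α is a pure quasi-isomorphism. Moreover, if L or N is pure-acyclic, then the sequence is a pure exact sequence in the category of R-complexes. In particular, a pure-acyclic subcomplex is a pure subcomplex if and only if it is a degreewise pure subcomplex. -/

import Mathlib

/- Common definitions: chain complexes of modules, purity, pure-acyclicity,
   pure quasi-isomorphisms, flavors of minimality, semi-flat, semi-projective and
   semi-injective complexes, and ring-theoretic conditions, following the paper. -/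

open CategoryTheory CategoryTheory.Limits

universe u

namespace PaperPM

variable (R : Type u) [Ring R]

/-- Chain complexes of left `R`-modules, indexed by `ℤ`. -/
abbrev Cx := ChainComplex (ModuleCat.{u} R) ℤ

section ModuleLevel

variable {L M N : Type u} [AddCommGroup L] [AddCommGroup M] [AddCommGroup N]
  [Module R L] [Module R M] [Module R N]

/-- `0 → L → M → N → 0` is a short exact sequence of modules. -/
def ModSES (f : L →ₗ[R] M) (g : M →ₗ[R] N) : Prop :=
  Function.Injective f ∧ Function.Surjective g ∧ Function.Exact f g

/-- The sequence `0 → Hom(A,L) → Hom(A,M) → Hom(A,N) → 0` is exact for every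
finitely presented module `A`; together with `ModSES` this is purity. -/
def HomExact (f : L →ₗ[R] M) (g : M →ₗ[R] N) : Prop :=
  ∀ (A : Type u) [AddCommGroup A] [Module R A], Module.FinitePresentation R A →
    Function.Injective (fun h : A →ₗ[R] L => f ∘ₗ h) ∧
    Function.Exact (fun h : A →ₗ[R] L => f ∘ₗ h) (fun h : A →ₗ[R] M => g ∘ₗ h) ∧
    Function.Surjective (fun h : A →ₗ[R] M => g ∘ₗ h)

/-- A pure short exact sequence of modules. -/
def PureSES (f : L →ₗ[R] M) (g : M →ₗ[R] N) : Prop :=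
  ModSES R f g ∧ HomExact R f g

end ModuleLevel

/-- A module `F` is flat iff every short exact sequence `0 → L → M → F → 0` is pure. -/
def FlatModule (F : Type u) [AddCommGroup F] [Module R F] : Prop :=
  ∀ (L M : Type u) [AddCommGroup L] [AddCommGroup M] [Module R L] [Module R M]
    (f : L →ₗ[R] M) (g : M →ₗ[R] F), ModSES R f g → HomExact R f g

/-- A module `P` is pure-projective if `Hom(P,−)` leaves every pure exact sequence exact. -/
def PureProjectiveModule (P : Type u) [AddCommGroup P] [Module R P] : Prop :=
  ∀ (L M N : Type u) [AddCommGroup L] [AddCommGroup M] [AddCommGroup N]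
    [Module R L] [Module R M] [Module R N] (f : L →ₗ[R] M) (g : M →ₗ[R] N),
    PureSES R f g →
      Function.Injective (fun h : P →ₗ[R] L => f ∘ₗ h) ∧
      Function.Exact (fun h : P →ₗ[R] L => f ∘ₗ h) (fun h : P →ₗ[R] M => g ∘ₗ h) ∧
      Function.Surjective (fun h : P →ₗ[R] M => g ∘ₗ h)

/-- A module `E` is pure-injective if `Hom(−,E)` leaves every pure exact sequence exact. -/
def PureInjectiveModule (E : Type u) [AddCommGroup E] [Module R E] : Prop :=
  ∀ (L M N : Type u) [AddCommGroup L] [AddCommGroup M] [AddCommGroup N]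
    [Module R L] [Module R M] [Module R N] (f : L →ₗ[R] M) (g : M →ₗ[R] N),
    PureSES R f g →
      Function.Injective (fun h : N →ₗ[R] E => h ∘ₗ g) ∧
      Function.Exact (fun h : N →ₗ[R] E => h ∘ₗ g) (fun h : M →ₗ[R] E => h ∘ₗ f) ∧
      Function.Surjective (fun h : M →ₗ[R] E => h ∘ₗ f)

/-- `R` is von Neumann regular: every (left) `R`-module is flat. -/
def VonNeumannRegular : Prop :=
  ∀ (M : Type u) [AddCommGroup M] [Module R M], FlatModule R M

/-- `R` is left perfect: every flat left `R`-module is projective. -/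
def LeftPerfect : Prop :=
  ∀ (M : Type u) [AddCommGroup M] [Module R M], FlatModule R M → Module.Projective R M

/-- `R` is semi-perfect: every finitely generated flat left `R`-module is projective. -/
def SemiPerfect : Prop :=
  ∀ (M : Type u) [AddCommGroup M] [Module R M],
    Module.Finite R M → FlatModule R M → Module.Projective R M

/-- A complex is acyclic if its homology vanishes, i.e. it is exact at every degree. -/
def Acyclic (M : Cx R) : Prop :=
  ∀ i : ℤ, Function.Exact (M.d (i + 1) i) (M.d i (i - 1))

/-- The cycle submodule `Z_i(M)`. -/
noncomputable def cyc (M : Cx R) (i : ℤ) : Submodule R (M.X i) :=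
  LinearMap.ker (M.d i (i - 1)).hom

lemma d_mem_cyc (M : Cx R) (i : ℤ) (x : M.X i) :
    M.d i (i - 1) x ∈ cyc R M (i - 1) := by
  have h := LinearMap.congr_fun (congrArg ModuleCat.Hom.hom (M.d_comp_d i (i - 1) (i - 1 - 1))) x
  rw [ModuleCat.hom_comp, LinearMap.comp_apply, ModuleCat.hom_zero, LinearMap.zero_apply] at h
  simpa [cyc, LinearMap.mem_ker] using h

/-- The map `M_i → Z_{i-1}(M)` induced by the differential. -/
noncomputable def cycMap (M : Cx R) (i : ℤ) : M.X i →ₗ[R] cyc R M (i - 1) :=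
  LinearMap.codRestrict (cyc R M (i - 1)) (M.d i (i - 1)).hom (d_mem_cyc R M i)

/-- A complex is pure-acyclic if it is acyclic and each sequence
`0 → Z_i(M) → M_i → Z_{i-1}(M) → 0` is pure. -/
def PureAcyclic (M : Cx R) : Prop :=
  ∀ i : ℤ, PureSES R (cyc R M i).subtype (cycMap R M i)

/-- A morphism of complexes is null-homotopic. -/
def NullHomotopic {M N : Cx R} (f : M ⟶ N) : Prop :=
  Nonempty (Homotopy f 0)

/-- A complex is contractible if its identity is null-homotopic. -/
def Contractible (M : Cx R) : Prop :=
  Nonempty (Homotopy (𝟙 M) 0)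

/-- A morphism of complexes is a homotopy equivalence: it has an inverse up to
chain homotopy. -/
def IsHomotopyEquiv {M N : Cx R} (α : M ⟶ N) : Prop :=
  ∃ β : N ⟶ M, Nonempty (Homotopy (α ≫ β) (𝟙 M)) ∧ Nonempty (Homotopy (β ≫ α) (𝟙 N))

/-- A complex is minimal if every homotopy equivalence `M → M` is an isomorphism. -/
def Minimal (M : Cx R) : Prop :=
  ∀ α : M ⟶ M, IsHomotopyEquiv R α → IsIso α

/-- A morphism `α` of complexes is a pure quasi-isomorphism iff its mapping cone is
pure-acyclic, equivalently iff `Hom(A, α)` is a quasi-isomorphism for every finitely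
presented module `A`. -/
def PureQuasiIso {M N : Cx R} (α : M ⟶ N) : Prop :=
  ∀ (A : ModuleCat.{u} R), Module.FinitePresentation R A →
    QuasiIso (((preadditiveCoyoneda.obj (Opposite.op A)).mapHomologicalComplex
      (ComplexShape.down ℤ)).map α)

/-- `0 → L → M → N → 0` is a short exact sequence of complexes. -/
def CxSES {L M N : Cx R} (α : L ⟶ M) (β : M ⟶ N) : Prop :=
  ∀ i : ℤ, Function.Injective (α.f i) ∧ Function.Surjective (β.f i) ∧
    Function.Exact (α.f i) (β.f i)

/-- A short exact sequence of complexes is degreewise pure. -/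
def DegreewisePure {L M N : Cx R} (α : L ⟶ M) (β : M ⟶ N) : Prop :=
  ∀ i : ℤ, HomExact R (α.f i).hom (β.f i).hom

/-- A short exact sequence of complexes is degreewise split. -/
def DegreewiseSplit {L M N : Cx R} (α : L ⟶ M) (β : M ⟶ N) : Prop :=
  ∀ i : ℤ, ∃ ρ : M.X i ⟶ L.X i, α.f i ≫ ρ = 𝟙 (L.X i)

/-- A bounded complex of finitely presented modules. -/
def BoundedFPCx (A : Cx R) : Prop :=
  (∀ i, Module.FinitePresentation R (A.X i)) ∧
  ∃ a b : ℤ, ∀ i, (i < a ∨ b < i) → Subsingleton (A.X i)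

/-- Purity in the category of complexes: the sequence of chain-map groups
`0 → Hom(A,L) → Hom(A,M) → Hom(A,N) → 0` is exact for every bounded complex `A`
of finitely presented modules. -/
def CxPure {L M N : Cx R} (α : L ⟶ M) (β : M ⟶ N) : Prop :=
  ∀ A : Cx R, BoundedFPCx R A →
    Function.Injective (fun h : A ⟶ L => h ≫ α) ∧
    Function.Exact (fun h : A ⟶ L => h ≫ α) (fun h : A ⟶ M => h ≫ β) ∧
    Function.Surjective (fun h : A ⟶ M => h ≫ β)

/-- A complex is pure-minimal if the zero complex is its only pure-acyclic pure
subcomplex. -/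
def PureMinimal (M : Cx R) : Prop :=
  ∀ (P Q : Cx R) (ι : P ⟶ M) (π : M ⟶ Q),
    CxSES R ι π → CxPure R ι π → PureAcyclic R P → IsZero P

/-- A complex is split-minimal if the zero complex is its only contractible split
subcomplex (direct summand). -/
def SplitMinimal (M : Cx R) : Prop :=
  ∀ (P : Cx R) (ι : P ⟶ M) (ρ : M ⟶ P), ι ≫ ρ = 𝟙 P → Contractible R P → IsZero P

/-- A complex is semi-projective if it consists of projective modules and `Hom(P,−)`
preserves acyclicity; the latter amounts to every chain map into an acyclic complex
being null-homotopic. -/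
def SemiProjective (P : Cx R) : Prop :=
  (∀ i, Module.Projective R (P.X i)) ∧
  ∀ N : Cx R, Acyclic R N → ∀ f : P ⟶ N, NullHomotopic R f

/-- A complex is semi-injective if it consists of injective modules and `Hom(−,I)`
preserves acyclicity; the latter amounts to every chain map from an acyclic complex
being null-homotopic. -/
def SemiInjective (I : Cx R) : Prop :=
  (∀ i, Module.Injective R (I.X i)) ∧
  ∀ N : Cx R, Acyclic R N → ∀ f : N ⟶ I, NullHomotopic R f

section Dual

/-- The scalar action making the character group `Hom_ℤ(W, ℚ/ℤ)` of a right
`R`-module `W` a left `R`-module. -/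
noncomputable instance charSMul (W : Type u) [AddCommGroup W] [Module Rᵐᵒᵖ W] :
    SMul R (CharacterModule W) :=
  ⟨fun r f => f.comp (DistribMulAction.toAddMonoidHom W (MulOpposite.op r))⟩

/-- The left `R`-module structure on the character group of a right `R`-module. -/
noncomputable instance charModule (W : Type u) [AddCommGroup W] [Module Rᵐᵒᵖ W] :
    Module R (CharacterModule W) where
  one_smul f := CharacterModule.ext _ fun w => by
    show f (MulOpposite.op (1 : R) • w) = f w
    rw [MulOpposite.op_one, one_smul]
  mul_smul r s f := CharacterModule.ext _ fun w => by
    show f (MulOpposite.op (r * s) • w) = f (MulOpposite.op s • MulOpposite.op r • w)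
    rw [MulOpposite.op_mul, mul_smul]
  smul_zero r := CharacterModule.ext _ fun w => rfl
  smul_add r f g := CharacterModule.ext _ fun w => rfl
  add_smul r s f := CharacterModule.ext _ fun w => by
    show f (MulOpposite.op (r + s) • w) = f (MulOpposite.op r • w) + f (MulOpposite.op s • w)
    rw [MulOpposite.op_add, add_smul, map_add]
  zero_smul f := CharacterModule.ext _ fun w => by
    show f (MulOpposite.op (0 : R) • w) = 0
    rw [MulOpposite.op_zero, zero_smul, map_zero]

/-- The character module of a right `R`-module, as a left `R`-module. -/
noncomputable def dualMod (W : ModuleCat.{u} Rᵐᵒᵖ) : ModuleCat.{u} R :=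
  ModuleCat.of R (CharacterModule W)

/-- The dual of a map of right `R`-modules. -/
noncomputable def dualMap {W W' : ModuleCat.{u} Rᵐᵒᵖ} (g : W ⟶ W') :
    dualMod R W' ⟶ dualMod R W :=
  ModuleCat.ofHom <|
    { toFun := fun (f : CharacterModule ↥W') => (f.comp g.hom.toAddMonoidHom : CharacterModule ↥W),
      map_add' := fun _ _ => rfl,
      map_smul' := fun r (f : CharacterModule ↥W') => CharacterModule.ext _ (fun w =>
        congrArg (fun x => f x) (g.hom.map_smul (MulOpposite.op r) w).symm) }

lemma dualMap_comp {W W' W'' : ModuleCat.{u} Rᵐᵒᵖ} (g : W ⟶ W') (h : W' ⟶ W'') :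
    dualMap R (g ≫ h) = dualMap R h ≫ dualMap R g := rfl

lemma dualMap_zero {W W' : ModuleCat.{u} Rᵐᵒᵖ} : dualMap R (0 : W ⟶ W') = 0 :=
  ModuleCat.hom_ext (LinearMap.ext (fun (f : CharacterModule ↥W') =>
    CharacterModule.ext _ (fun _ => map_zero f)))

/-- The character dual of a complex `N` of right `R`-modules, as a complex of left
`R`-modules: `(N⁺)_i = (N_{-i})⁺`. -/
noncomputable def dualCx (N : ChainComplex (ModuleCat.{u} Rᵐᵒᵖ) ℤ) : Cx R :=
  ChainComplex.of (fun i => dualMod R (N.X (-i)))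
    (fun i => dualMap R (N.d (-i) (-(i + 1))))
    (fun n => by rw [← dualMap_comp, N.d_comp_d, dualMap_zero])

/-- A complex is semi-flat if it consists of flat modules and `− ⊗ F` preserves
acyclicity; by character-module duality the latter amounts to every chain map into
the character dual of an acyclic complex of right `R`-modules being null-homotopic. -/
def SemiFlat (F : Cx R) : Prop :=
  (∀ i, FlatModule R (F.X i)) ∧
  ∀ N : ChainComplex (ModuleCat.{u} Rᵐᵒᵖ) ℤ, Acyclic Rᵐᵒᵖ N →
    ∀ f : F ⟶ dualCx R N, NullHomotopic R f

end Dual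

/-- Two complexes are isomorphic in the derived category iff they are linked by a
roof of quasi-isomorphisms. -/
def DerivedIso (M N : Cx R) : Prop :=
  ∃ (W : Cx R) (f : W ⟶ M) (g : W ⟶ N), QuasiIso f ∧ QuasiIso g

/-- The flat dimension of `M` is at most `n`: `M` is isomorphic in the derived
category to a complex of flat modules concentrated in degrees `≤ n`. -/
def FdLe (M : Cx R) (n : ℤ) : Prop :=
  ∃ F : Cx R, (∀ i, FlatModule R (F.X i)) ∧ (∀ i, n < i → Subsingleton (F.X i)) ∧
    DerivedIso R M F

/-- The projective dimension of `M` is at most `n`: `M` is isomorphic in the derived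
category to a complex of projective modules concentrated in degrees `≤ n`. -/
def PdLe (M : Cx R) (n : ℤ) : Prop :=
  ∃ P : Cx R, (∀ i, Module.Projective R (P.X i)) ∧ (∀ i, n < i → Subsingleton (P.X i)) ∧
    DerivedIso R M P

/- ===== Auxiliary work for statement2 ===== -/

section Aux

variable {R : Type u} [Ring R]

/-- Cast along an equality of indices. -/
def xcast (K : Cx R) {i j : ℤ} (h : i = j) : K.X i ≃ₗ[R] K.X j :=
  h ▸ LinearEquiv.refl R (K.X i)

@[simp] lemma xcast_rfl (K : Cx R) (i : ℤ) : xcast K (rfl : i = i) = LinearEquiv.refl R (K.X i) :=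
  rfl

lemma d_xcast (K : Cx R) {i j : ℤ} (h : i = j) (k : ℤ) :
    (K.d j k).hom ∘ₗ (xcast K h).toLinearMap = (K.d i k).hom := by
  subst h; rfl

lemma xcast_d (K : Cx R) {j k : ℤ} (h : j = k) (i : ℤ) :
    (xcast K h).toLinearMap ∘ₗ (K.d i j).hom = (K.d i k).hom := by
  subst h; rfl

lemma hom_xcast {K K' : Cx R} (φ : K ⟶ K') {i j : ℤ} (h : i = j) :
    (φ.f j).hom ∘ₗ (xcast K h).toLinearMap
      = (xcast K' h).toLinearMap ∘ₗ (φ.f i).hom := by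
  subst h; rfl

lemma xcast_cancel (K : Cx R) {i j : ℤ} (h : i = j) {B : Type u} [AddCommGroup B] [Module R B]
    {f g : B →ₗ[R] K.X i} (hfg : (xcast K h).toLinearMap ∘ₗ f = (xcast K h).toLinearMap ∘ₗ g) :
    f = g := by
  subst h; exact hfg

lemma lmap_eq_of_subsingleton {A B : Type u} [AddCommGroup A] [AddCommGroup B]
    [Module R A] [Module R B] [Subsingleton A] (f g : A →ₗ[R] B) : f = g := by
  ext x
  rw [Subsingleton.elim x 0, map_zero, map_zero]

lemma comp_eq_of_subsingleton {A A' B : Type u} [AddCommGroup A] [AddCommGroup A']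
    [AddCommGroup B] [Module R A] [Module R A'] [Module R B] [Subsingleton A']
    (f : A →ₗ[R] B) (g : A' →ₗ[R] A) (f' : A' →ₗ[R] B) : f ∘ₗ g = f' := by
  apply lmap_eq_of_subsingleton

/-- Two-index elementwise formulation of pure acyclicity: `Hom(A, L)` is exact for
every finitely presented `A`. -/
def HomAc (L : Cx R) : Prop :=
  ∀ (A : Type u) [AddCommGroup A] [Module R A], Module.FinitePresentation R A →
    ∀ (i j : ℤ), i = j + 1 → ∀ g : A →ₗ[R] L.X j, (L.d j (j-1)).hom ∘ₗ g = 0 →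
      ∃ h : A →ₗ[R] L.X i, (L.d i j).hom ∘ₗ h = g

variable (R)

lemma d_comp_d_lm (K : Cx R) (i j k : ℤ) : (K.d j k).hom ∘ₗ (K.d i j).hom = 0 := by
  have := congrArg ModuleCat.Hom.hom (K.d_comp_d i j k)
  rwa [ModuleCat.hom_comp, ModuleCat.hom_zero] at this

lemma pureAcyclic_homAc {L : Cx R} (hL : PureAcyclic R L) : HomAc L := by
  intro A _ _ hA i j hij g hg
  obtain rfl : j = i - 1 := by omega
  obtain ⟨-, hhom⟩ := hL i
  obtain ⟨-, -, hsurj⟩ := hhom A hA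
  -- g lands in cycles
  have hmem : ∀ a, g a ∈ cyc R L (i-1) := by
    intro a
    have := LinearMap.congr_fun hg a
    simpa [cyc, LinearMap.mem_ker] using this
  obtain ⟨h, hh⟩ := hsurj (LinearMap.codRestrict (cyc R L (i-1)) g hmem)
  refine ⟨h, ?_⟩
  ext a
  have := LinearMap.congr_fun hh a
  have := congrArg (Submodule.subtype (cyc R L (i-1))) this
  simpa [cycMap, LinearMap.codRestrict] using this

lemma homAc_pureAcyclic {L : Cx R} (hL : HomAc L) : PureAcyclic R L := by
  intro i
  have hsub : Function.Injective (Submodule.subtype (cyc R L i)) := Subtype.val_injective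
  refine ⟨⟨hsub, ?_, ?_⟩, ?_⟩
  · -- surjectivity of cycMap
    intro z
    obtain ⟨h, hh⟩ := hL R inferInstance i (i-1) (by omega)
      ((Submodule.subtype _) ∘ₗ LinearMap.toSpanSingleton R _ z)
      (by
        have hz : L.d (i-1) (i-1-1) z.1 = 0 := z.2
        ext
        simp [LinearMap.toSpanSingleton, hz])
    refine ⟨h 1, ?_⟩
    apply Subtype.ext
    have := LinearMap.congr_fun hh 1
    simpa [cycMap, LinearMap.codRestrict, LinearMap.toSpanSingleton] using this
  · -- exactness
    intro y
    constructor
    · intro hy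
      have : L.d i (i-1) y = 0 := by
        have := congrArg (Submodule.subtype _) hy
        simpa [cycMap, LinearMap.codRestrict] using this
      exact ⟨⟨y, this⟩, rfl⟩
    · rintro ⟨z, rfl⟩
      apply Subtype.ext
      exact z.2
  · -- HomExact
    intro A _ _ hA
    refine ⟨?_, ?_, ?_⟩
    · intro f g hfg
      ext a
      exact LinearMap.congr_fun hfg a
    · intro y
      constructor
      · intro hy
        have hmem : ∀ a, y a ∈ cyc R L i := by
          intro a
          have := congrArg (fun (w : A →ₗ[R] cyc R L (i-1)) =>
            (Submodule.subtype _ : cyc R L (i-1) →ₗ[R] L.X (i-1)) (w a)) hy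
          exact congrArg Subtype.val (LinearMap.congr_fun hy a)
        exact ⟨LinearMap.codRestrict _ y hmem, by ext a; rfl⟩
      · rintro ⟨x, rfl⟩
        ext a
        have h2 := (x a).2
        simp only [cyc, LinearMap.mem_ker] at h2
        exact LinearMap.mem_ker.1 (x a).2
    · intro y
      obtain ⟨h, hh⟩ := hL A hA i (i-1) (by omega) ((Submodule.subtype _) ∘ₗ y)
        (by
          ext a
          have : L.d (i-1) (i-1-1) (y a).1 = 0 := (y a).2
          simpa using this)
      refine ⟨h, ?_⟩
      ext a
      have := LinearMap.congr_fun hh a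
      simpa [cycMap, LinearMap.codRestrict] using this

end Aux
section Aux2

variable {R : Type u} [Ring R]

/-- Generic construction of a `ℤ`-indexed family by upward recursion, when everything
is trivially satisfiable in low and high degrees. -/
lemma exists_seq {T : ℤ → Type*} [∀ i, Inhabited (T i)]
    (P : ∀ i : ℤ, T i → T (i-1) → Prop) (b c : ℤ)
    (base : ∀ i ≤ b, ∀ x y, P i x y)
    (top : ∀ i, c ≤ i → ∀ x y, P i x y)
    (step : ∀ i, ∀ x : T (i-1), ∀ y : T (i-1-1), P (i-1) x y → ∃ z : T i, P i z x) :
    ∃ s : ∀ i, T i, ∀ i, P i (s i) (s (i-1)) := by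
  have Q : ∀ n : ℕ, ∃ s : ∀ i, T i, ∀ i ≤ b + (n:ℤ), P i (s i) (s (i-1)) := by
    intro n
    induction n with
    | zero =>
      exact ⟨fun i => default, fun i hi => base i (by omega) _ _⟩
    | succ n ih =>
      obtain ⟨s, hs⟩ := ih
      obtain ⟨z, hz⟩ := step (b+(n:ℤ)+1) (s (b+(n:ℤ)+1-1)) (s (b+(n:ℤ)+1-1-1))
        (hs _ (by omega))
      refine ⟨Function.update s (b+(n:ℤ)+1) z, fun i hi => ?_⟩
      by_cases hib : i = b+(n:ℤ)+1
      · subst hib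
        rw [Function.update_self, Function.update_of_ne (by omega)]
        exact hz
      · rw [Function.update_of_ne hib, Function.update_of_ne (by omega)]
        exact hs i (by omega)
  obtain ⟨s, hs⟩ := Q (c - b).toNat
  refine ⟨s, fun i => ?_⟩
  by_cases hi : i ≤ b + ((c-b).toNat : ℤ)
  · exact hs i hi
  · exact top i (by omega) _ _

/-- Factor a map through an injection whose image contains it. -/
lemma exists_factor {L' M' N' A : Type u} [AddCommGroup L'] [AddCommGroup M']
    [AddCommGroup N'] [AddCommGroup A] [Module R L'] [Module R M'] [Module R N'] [Module R A]
    {f : L' →ₗ[R] M'} {g : M' →ₗ[R] N'} (hinj : Function.Injective f)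
    (hex : Function.Exact f g) (h : A →ₗ[R] M') (hh : g ∘ₗ h = 0) :
    ∃ k : A →ₗ[R] L', f ∘ₗ k = h := by
  have hmem : ∀ a, ∃ x, f x = h a := by
    intro a
    have : g (h a) = 0 := LinearMap.congr_fun hh a
    exact (hex (h a)).1 this
  choose k hk using hmem
  refine ⟨{ toFun := k,
            map_add' := fun a a' => hinj (by rw [map_add, hk, hk, hk, map_add]),
            map_smul' := fun r a => hinj (by rw [map_smul, hk]; simp [hk, map_smul]) }, ?_⟩
  ext a
  exact hk a

lemma cxses_comp_zero {L M N : Cx R} {α : L ⟶ M} {β : M ⟶ N} (hses : CxSES R α β) :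
    α ≫ β = 0 := by
  ext i a
  exact (hses i).2.2.apply_apply_eq_zero a

/-- The injectivity and middle-exactness parts of complex-purity follow from
the short exact sequence alone. -/
lemma cxpure_easy {L M N : Cx R} {α : L ⟶ M} {β : M ⟶ N} (hses : CxSES R α β) (A : Cx R) :
    Function.Injective (fun h : A ⟶ L => h ≫ α) ∧
    Function.Exact (fun h : A ⟶ L => h ≫ α) (fun h : A ⟶ M => h ≫ β) := by
  constructor
  · intro h h' hhh
    ext i a
    exact (hses i).1 (congrArg (fun (w : A ⟶ M) => w.f i a) hhh)
  · intro y
    constructor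
    · intro hy
      -- degreewise factorization
      have hfac : ∀ i, ∃ k : A.X i →ₗ[R] L.X i, (α.f i).hom ∘ₗ k = (y.f i).hom := by
        intro i
        refine exists_factor (hses i).1 (hses i).2.2 (y.f i).hom ?_
        have := congrArg (fun (w : A ⟶ N) => w.f i) hy
        simpa using congrArg ModuleCat.Hom.hom this
      choose k hk using hfac
      refine ⟨{ f := fun i => ModuleCat.ofHom (k i), comm' := ?_ }, ?_⟩
      · intro i j hij
        refine ModuleCat.hom_ext (LinearMap.ext ?_)
        intro a
        apply (hses j).1
        have h1 : α.f j ((L.d i j) (k i a)) = M.d i j (α.f i (k i a)) :=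
          (LinearMap.congr_fun (congrArg ModuleCat.Hom.hom
            (show (L.d i j ≫ α.f j : L.X i ⟶ M.X j) = α.f i ≫ M.d i j from (α.comm i j).symm))
            (k i a)).symm ▸ rfl
        have e1 : (α.f i) ((k i) a) = y.f i a := LinearMap.congr_fun (hk i) a
        have e2 : (α.f j) ((k j) ((A.d i j) a)) = y.f j ((A.d i j) a) :=
          LinearMap.congr_fun (hk j) ((A.d i j) a)
        have e3 : (M.d i j) (y.f i a) = y.f j ((A.d i j) a) := LinearMap.congr_fun (congrArg ModuleCat.Hom.hom
          (show (y.f i ≫ M.d i j : A.X i ⟶ M.X j) = A.d i j ≫ y.f j from y.comm i j)) a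
        show α.f j ((L.d i j) (k i a)) = α.f j (k j ((A.d i j) a))
        rw [h1, e1, e2, e3]
      · ext i a
        exact LinearMap.congr_fun (hk i) a
    · rintro ⟨x, rfl⟩
      ext i a
      have h0 := cxses_comp_zero hses
      have : (α.f i ≫ β.f i) (x.f i a) = 0 := by
        have := congrArg (fun (w : L ⟶ N) => w.f i (x.f i a)) h0
        simpa using this
      simpa using this

end Aux2
section Aux3

variable {R : Type u} [Ring R]

lemma lift_of_homAc_left {L M N : Cx R} {α : L ⟶ M} {β : M ⟶ N}
    (hses : CxSES R α β) (hdp : DegreewisePure R α β) (hLa : HomAc L)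
    (A : Cx R) (hA : BoundedFPCx R A) (g : A ⟶ N) :
    ∃ h : A ⟶ M, h ≫ β = g := by
  obtain ⟨hfp, a, b, hbd⟩ := hA
  -- degreewise lifts
  have hσ : ∀ i, ∃ s : A.X i →ₗ[R] M.X i, (β.f i).hom ∘ₗ s = (g.f i).hom :=
    fun i => ((hdp i) (A.X i) (hfp i)).2.2 (g.f i).hom
  choose σ hσ using hσ
  -- the defect
  set τ : ∀ i, A.X i →ₗ[R] M.X (i-1) :=
    fun i => σ (i-1) ∘ₗ (A.d i (i-1)).hom - (M.d i (i-1)).hom ∘ₗ σ i with hτ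
  have hβτ : ∀ i, (β.f (i-1)).hom ∘ₗ τ i = 0 := by
    intro i
    have hcomm : (N.d i (i-1)).hom ∘ₗ (β.f i).hom
        = (β.f (i-1)).hom ∘ₗ (M.d i (i-1)).hom := congrArg ModuleCat.Hom.hom (β.comm i (i-1))
    have hgcomm : (N.d i (i-1)).hom ∘ₗ (g.f i).hom
        = (g.f (i-1)).hom ∘ₗ (A.d i (i-1)).hom := congrArg ModuleCat.Hom.hom (g.comm i (i-1))
    ext x
    have h1 : β.f (i-1) (σ (i-1) ((A.d i (i-1)) x)) = g.f (i-1) ((A.d i (i-1)) x) :=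
      LinearMap.congr_fun (hσ (i-1)) _
    have h2 : β.f (i-1) ((M.d i (i-1)) (σ i x)) = N.d i (i-1) (β.f i (σ i x)) :=
      (LinearMap.congr_fun hcomm (σ i x)).symm
    have h3 : β.f i (σ i x) = g.f i x := LinearMap.congr_fun (hσ i) x
    have h4 : N.d i (i-1) (g.f i x) = g.f (i-1) ((A.d i (i-1)) x) :=
      LinearMap.congr_fun hgcomm x
    simp only [hτ, LinearMap.comp_apply, LinearMap.sub_apply, map_sub, LinearMap.zero_apply,
      h1, h2, h3, h4]
    abel
  -- factor the defect through α
  have hlam : ∀ i, ∃ lam : A.X i →ₗ[R] L.X (i-1),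
      (α.f (i-1)).hom ∘ₗ lam = τ i :=
    fun i => exists_factor (hses (i-1)).1 (hses (i-1)).2.2 (τ i) (hβτ i)
  choose lam hlam using hlam
  -- lam is a cycle
  have hcyc : ∀ i, (L.d (i-1) (i-1-1)).hom ∘ₗ lam i
      + lam (i-1) ∘ₗ (A.d i (i-1)).hom = 0 := by
    intro i
    have hinj : Function.Injective (α.f (i-1-1)) := (hses (i-1-1)).1
    ext x
    apply hinj
    have hαcomm : (M.d (i-1) (i-1-1)).hom
          ∘ₗ (α.f (i-1)).hom
        = (α.f (i-1-1)).hom ∘ₗ (L.d (i-1) (i-1-1)).hom :=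
      congrArg ModuleCat.Hom.hom (α.comm (i-1) (i-1-1))
    have e1 : α.f (i-1-1) ((L.d (i-1) (i-1-1)) (lam i x))
        = M.d (i-1) (i-1-1) (α.f (i-1) (lam i x)) := (LinearMap.congr_fun hαcomm _).symm
    have e2 : α.f (i-1) (lam i x) = τ i x := LinearMap.congr_fun (hlam i) x
    have e3 : α.f (i-1-1) (lam (i-1) ((A.d i (i-1)) x)) = τ (i-1) ((A.d i (i-1)) x) :=
      LinearMap.congr_fun (hlam (i-1)) _
    have e4 : (M.d (i-1) (i-1-1)) ((M.d i (i-1)) (σ i x)) = 0 :=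
      LinearMap.congr_fun (d_comp_d_lm R M i (i-1) (i-1-1)) (σ i x)
    have e5 : (A.d (i-1) (i-1-1)) ((A.d i (i-1)) x) = 0 :=
      LinearMap.congr_fun (d_comp_d_lm R A i (i-1) (i-1-1)) x
    simp only [LinearMap.add_apply, LinearMap.comp_apply, map_add, map_zero,
      LinearMap.zero_apply, e1, e2, e3, hτ, LinearMap.sub_apply, map_sub, e4, e5]
    abel
  -- construct the null-homotopy by recursion
  obtain ⟨μ, hμ⟩ := exists_seq (T := fun i => A.X i →ₗ[R] L.X i)
    (fun i x y => (L.d i (i-1)).hom ∘ₗ x - y ∘ₗ (A.d i (i-1)).hom = lam i)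
    (a-1) (b+1)
    (by
      intro i hi x y
      have : Subsingleton (A.X i) := hbd i (Or.inl (by omega))
      apply lmap_eq_of_subsingleton)
    (by
      intro i hi x y
      have : Subsingleton (A.X i) := hbd i (Or.inr (by omega))
      apply lmap_eq_of_subsingleton)
    (by
      intro i x y hP
      have hdx : (L.d (i-1) (i-1-1)).hom ∘ₗ x
          = lam (i-1) + y ∘ₗ (A.d (i-1) (i-1-1)).hom := by
        rw [← hP]; abel
      obtain ⟨z, hz⟩ := hLa (A.X i) (hfp i) i (i-1) (by omega)
        (lam i + x ∘ₗ (A.d i (i-1)).hom)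
        (by
          rw [LinearMap.comp_add, ← LinearMap.comp_assoc, hdx]
          have hcyci := hcyc i
          have hdd : (y ∘ₗ (A.d (i-1) (i-1-1)).hom) ∘ₗ (A.d i (i-1)).hom = 0 := by
            rw [LinearMap.comp_assoc, d_comp_d_lm, LinearMap.comp_zero]
          rw [LinearMap.add_comp, hdd, add_zero]
          exact hcyci)
      refine ⟨z, ?_⟩
      show (L.d i (i-1)).hom ∘ₗ z - x ∘ₗ (A.d i (i-1)).hom = lam i
      rw [hz]
      abel)
  -- assemble the chain map
  refine ⟨{ f := fun i => ModuleCat.ofHom (σ i + (α.f i).hom ∘ₗ μ i),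
            comm' := ?_ }, ?_⟩
  · intro i j hij
    obtain rfl : j = i - 1 := by
      have : j + 1 = i := hij
      omega
    refine ModuleCat.hom_ext (LinearMap.ext ?_)
    intro x
    have hα : (M.d i (i-1)).hom ∘ₗ (α.f i).hom
        = (α.f (i-1)).hom ∘ₗ (L.d i (i-1)).hom := congrArg ModuleCat.Hom.hom (α.comm i (i-1))
    have h1 : M.d i (i-1) (α.f i (μ i x)) = α.f (i-1) (L.d i (i-1) (μ i x)) :=
      LinearMap.congr_fun hα _
    have h2 : L.d i (i-1) (μ i x) = lam i x + μ (i-1) ((A.d i (i-1)) x) := by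
      have := LinearMap.congr_fun (hμ i) x
      simp only [LinearMap.sub_apply, LinearMap.comp_apply] at this
      have := congrArg (fun w => w + μ (i-1) ((A.d i (i-1)) x)) this
      simpa [sub_add_cancel] using this
    have h3 : α.f (i-1) (lam i x) = σ (i-1) ((A.d i (i-1)) x) - M.d i (i-1) (σ i x) := by
      have := LinearMap.congr_fun (hlam i) x
      simpa [hτ] using this
    show (M.d i (i-1)) (σ i x + α.f i (μ i x))
        = σ (i-1) ((A.d i (i-1)) x) + α.f (i-1) (μ (i-1) ((A.d i (i-1)) x))
    rw [map_add, h1, h2, map_add, h3]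
    abel
  · ext i x
    have h1 : β.f i (σ i x) = g.f i x := LinearMap.congr_fun (hσ i) x
    have h2 : β.f i (α.f i (μ i x)) = 0 := (hses i).2.2.apply_apply_eq_zero _
    show β.f i (σ i x + α.f i (μ i x)) = g.f i x
    rw [map_add, h1, h2, add_zero]

end Aux3
section Aux4

variable {R : Type u} [Ring R]

lemma lift_of_homAc_right {L M N : Cx R} {α : L ⟶ M} {β : M ⟶ N}
    (hses : CxSES R α β) (hdp : DegreewisePure R α β) (hNa : HomAc N)
    (A : Cx R) (hA : BoundedFPCx R A) (g : A ⟶ N) :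
    ∃ h : A ⟶ M, h ≫ β = g := by
  obtain ⟨hfp, a, b, hbd⟩ := hA
  -- a contracting homotopy of g, by recursion
  obtain ⟨s, hs⟩ := exists_seq (T := fun i => A.X i →ₗ[R] N.X (i+1))
    (fun i x y => (N.d (i+1) i).hom ∘ₗ x
      + (xcast N (show i-1+1 = i by omega)).toLinearMap ∘ₗ (y ∘ₗ (A.d i (i-1)).hom) = (g.f i).hom)
    (a-1) (b+1)
    (by
      intro i hi x y
      have : Subsingleton (A.X i) := hbd i (Or.inl (by omega))
      apply lmap_eq_of_subsingleton)
    (by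
      intro i hi x y
      have : Subsingleton (A.X i) := hbd i (Or.inr (by omega))
      apply lmap_eq_of_subsingleton)
    (by
      intro i x y hP
      have hgc : (N.d i (i-1)).hom ∘ₗ (g.f i).hom
          = (g.f (i-1)).hom ∘ₗ (A.d i (i-1)).hom := congrArg ModuleCat.Hom.hom (g.comm i (i-1))
      have hdx : (N.d (i-1+1) (i-1)).hom ∘ₗ x
          = (g.f (i-1)).hom - (xcast N (show i-1-1+1 = i-1 by omega)).toLinearMap
              ∘ₗ (y ∘ₗ (A.d (i-1) (i-1-1)).hom) := by
        rw [← hP]; abel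
      obtain ⟨z, hz⟩ := hNa (A.X i) (hfp i) (i+1) i (by omega)
        ((g.f i).hom - (xcast N (show i-1+1 = i by omega)).toLinearMap ∘ₗ (x ∘ₗ (A.d i (i-1)).hom))
        (by
          ext w
          have f1 : N.d i (i-1) (g.f i w) = g.f (i-1) ((A.d i (i-1)) w) :=
            LinearMap.congr_fun hgc w
          have f2 : N.d i (i-1) ((xcast N (show i-1+1 = i by omega)) (x ((A.d i (i-1)) w)))
              = N.d (i-1+1) (i-1) (x ((A.d i (i-1)) w)) :=
            LinearMap.congr_fun (d_xcast N (show i-1+1 = i by omega) (i-1)) _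
          have f3 : N.d (i-1+1) (i-1) (x ((A.d i (i-1)) w))
              = g.f (i-1) ((A.d i (i-1)) w)
                - (xcast N (show i-1-1+1 = i-1 by omega)) (y ((A.d (i-1) (i-1-1))
                    ((A.d i (i-1)) w))) := by
            have := LinearMap.congr_fun hdx ((A.d i (i-1)) w)
            simpa using this
          have f4 : (A.d (i-1) (i-1-1)) ((A.d i (i-1)) w) = 0 :=
            LinearMap.congr_fun (d_comp_d_lm R A i (i-1) (i-1-1)) w
          show N.d i (i-1) ((g.f i) w
            - (xcast N (show i-1+1 = i by omega)) (x ((A.d i (i-1)) w))) = 0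
          rw [map_sub, f1, f2, f3, f4, map_zero, map_zero, sub_zero, sub_self])
      refine ⟨z, ?_⟩
      show (N.d (i+1) i).hom ∘ₗ z
        + (xcast N (show i-1+1 = i by omega)).toLinearMap ∘ₗ (x ∘ₗ (A.d i (i-1)).hom) = (g.f i).hom
      rw [hz]
      abel)
  -- lift the homotopy degreewise through β
  have ht : ∀ i, ∃ t : A.X i →ₗ[R] M.X (i+1),
      (β.f (i+1)).hom ∘ₗ t = s i :=
    fun i => ((hdp (i+1)) (A.X i) (hfp i)).2.2 (s i)
  choose t ht using ht
  refine ⟨{ f := fun i => ModuleCat.ofHom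
              ((M.d (i+1) i).hom ∘ₗ t i
                + (xcast M (show i-1+1 = i by omega)).toLinearMap ∘ₗ (t (i-1) ∘ₗ (A.d i (i-1)).hom)),
            comm' := ?_ }, ?_⟩
  · intro i j hij
    obtain rfl : j = i - 1 := by
      have : j + 1 = i := hij
      omega
    apply ModuleCat.hom_ext
    show (M.d i (i-1)).hom
        ∘ₗ ((M.d (i+1) i).hom ∘ₗ t i
          + (xcast M (show i-1+1 = i by omega)).toLinearMap ∘ₗ (t (i-1) ∘ₗ (A.d i (i-1)).hom))
      = ((M.d (i-1+1) (i-1)).hom ∘ₗ t (i-1)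
          + (xcast M (show i-1-1+1 = i-1 by omega)).toLinearMap
            ∘ₗ (t (i-1-1) ∘ₗ (A.d (i-1) (i-1-1)).hom)) ∘ₗ (A.d i (i-1)).hom
    ext w
    have f1 : M.d i (i-1) (M.d (i+1) i (t i w)) = 0 :=
      LinearMap.congr_fun (d_comp_d_lm R M (i+1) i (i-1)) (t i w)
    have f2 : M.d i (i-1) ((xcast M (show i-1+1 = i by omega)) (t (i-1) ((A.d i (i-1)) w)))
        = M.d (i-1+1) (i-1) (t (i-1) ((A.d i (i-1)) w)) :=
      LinearMap.congr_fun (d_xcast M (show i-1+1 = i by omega) (i-1)) _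
    have f3 : (A.d (i-1) (i-1-1)) ((A.d i (i-1)) w) = 0 :=
      LinearMap.congr_fun (d_comp_d_lm R A i (i-1) (i-1-1)) w
    show M.d i (i-1) (M.d (i+1) i (t i w)
          + (xcast M (show i-1+1 = i by omega)) (t (i-1) ((A.d i (i-1)) w)))
      = M.d (i-1+1) (i-1) (t (i-1) ((A.d i (i-1)) w))
          + (xcast M (show i-1-1+1 = i-1 by omega))
              (t (i-1-1) ((A.d (i-1) (i-1-1)) ((A.d i (i-1)) w)))
    rw [map_add, f1, f2, f3, map_zero, map_zero, zero_add, add_zero]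
  · ext i x
    have hβc : (N.d (i+1) i).hom ∘ₗ (β.f (i+1)).hom
        = (β.f i).hom ∘ₗ (M.d (i+1) i).hom := congrArg ModuleCat.Hom.hom (β.comm (i+1) i)
    have hx : (β.f i).hom
          ∘ₗ (xcast M (show i-1+1 = i by omega)).toLinearMap
        = (xcast N (show i-1+1 = i by omega)).toLinearMap
          ∘ₗ (β.f (i-1+1)).hom := hom_xcast β _
    have e1 : β.f i (M.d (i+1) i (t i x)) = N.d (i+1) i (β.f (i+1) (t i x)) :=
      (LinearMap.congr_fun hβc (t i x)).symm
    have e2 : β.f (i+1) (t i x) = s i x := LinearMap.congr_fun (ht i) x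
    have e3 : β.f i ((xcast M (show i-1+1 = i by omega)) (t (i-1) ((A.d i (i-1)) x)))
        = (xcast N (show i-1+1 = i by omega)) (β.f (i-1+1) (t (i-1) ((A.d i (i-1)) x))) :=
      LinearMap.congr_fun hx _
    have e4 : β.f (i-1+1) (t (i-1) ((A.d i (i-1)) x)) = s (i-1) ((A.d i (i-1)) x) :=
      LinearMap.congr_fun (ht (i-1)) _
    have e5 := LinearMap.congr_fun (hs i) x
    simp only [LinearMap.add_apply, LinearMap.comp_apply, LinearEquiv.coe_coe] at e5 ⊢
    show β.f i (M.d (i+1) i (t i x) + (xcast M _) (t (i-1) ((A.d i (i-1)) x))) = g.f i x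
    rw [map_add, e1, e2, e3, e4]
    exact e5

end Aux4
section Aux5

variable {R : Type u} [Ring R]

lemma cxpure_of_pureAcyclic {L M N : Cx R} {α : L ⟶ M} {β : M ⟶ N}
    (hses : CxSES R α β) (hdp : DegreewisePure R α β)
    (hp : PureAcyclic R L ∨ PureAcyclic R N) : CxPure R α β := by
  intro A hA
  obtain ⟨hinj, hex⟩ := cxpure_easy hses A
  refine ⟨hinj, hex, ?_⟩
  intro g
  rcases hp with hL | hN
  · exact lift_of_homAc_left hses hdp (pureAcyclic_homAc R hL) A hA g
  · exact lift_of_homAc_right hses hdp (pureAcyclic_homAc R hN) A hA g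

variable (R)

/-- Degrees of the disk complex. -/
noncomputable def diskX (A₀ : ModuleCat.{u} R) (i₀ j : ℤ) : ModuleCat.{u} R :=
  if j = i₀ ∨ j = i₀ - 1 then A₀ else ModuleCat.of R PUnit

lemma diskX_eq {A₀ : ModuleCat.{u} R} {i₀ j : ℤ} (h : j = i₀ ∨ j = i₀ - 1) :
    diskX R A₀ i₀ j = A₀ := if_pos h

/-- The disk complex: `A₀` in degrees `i₀` and `i₀ - 1`, with identity differential. -/
noncomputable def disk (A₀ : ModuleCat.{u} R) (i₀ : ℤ) : Cx R where
  X := diskX R A₀ i₀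
  d i j :=
    if h : i = i₀ ∧ j = i₀ - 1 then
      eqToHom (diskX_eq R (Or.inl h.1)) ≫ eqToHom (diskX_eq R (Or.inr h.2)).symm
    else 0
  shape i j hij := by
    rw [dif_neg]
    rintro ⟨h1, h2⟩
    subst h2
    exact hij (show i₀ - 1 + 1 = i by omega)
  d_comp_d' i j k hij hjk := by
    by_cases h : j = i₀ ∧ k = i₀ - 1
    · rw [dif_neg (by rintro ⟨-, h2⟩; have := h.1; omega : ¬(i = i₀ ∧ j = i₀ - 1)), zero_comp]
    · rw [dif_neg h, comp_zero]

lemma disk_boundedFP (A₀ : ModuleCat.{u} R) (hA₀ : Module.FinitePresentation R A₀) (i₀ : ℤ) :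
    BoundedFPCx R (disk R A₀ i₀) := by
  constructor
  · intro j
    show Module.FinitePresentation R (diskX R A₀ i₀ j)
    unfold diskX
    by_cases h : j = i₀ ∨ j = i₀ - 1
    · rw [if_pos h]; exact hA₀
    · rw [if_neg h]; exact Module.finitePresentation_of_projective _ _
  · refine ⟨i₀ - 1, i₀, fun j hj => ?_⟩
    show Subsingleton (diskX R A₀ i₀ j)
    unfold diskX
    rw [if_neg (by omega)]
    exact inferInstanceAs (Subsingleton PUnit)

/-- The chain map from the disk complex determined by a module map in degree `i₀`. -/
noncomputable def diskHom {A₀ : ModuleCat.{u} R} {i₀ : ℤ} {Q : Cx R} (φ : A₀ ⟶ Q.X i₀) :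
    disk R A₀ i₀ ⟶ Q where
  f j :=
    if h1 : j = i₀ then
      eqToHom (diskX_eq R (Or.inl h1)) ≫ φ ≫ eqToHom (congrArg Q.X h1).symm
    else if h2 : j = i₀ - 1 then
      eqToHom (diskX_eq R (Or.inr h2)) ≫ (φ ≫ Q.d i₀ (i₀ - 1)) ≫ eqToHom (congrArg Q.X h2).symm
    else 0
  comm' i j hij := by
    obtain rfl : j = i - 1 := by
      have : j + 1 = i := hij
      omega
    dsimp only [disk]
    by_cases h1 : i = i₀
    · subst h1
      simp only [dif_pos rfl, dif_pos (⟨rfl, rfl⟩ : i = i ∧ i - 1 = i - 1),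
        dif_neg (by omega : ¬(i - 1 = i)), dif_pos rfl]
      simp
    · rw [dif_neg (by rintro ⟨rfl, -⟩; exact h1 rfl : ¬(i = i₀ ∧ i - 1 = i₀ - 1)), zero_comp,
        dif_neg h1]
      by_cases h2 : i = i₀ - 1
      · erw [dif_pos h2]
        subst h2
        simp
      · erw [dif_neg h2, zero_comp]

lemma diskHom_lift {A₀ : ModuleCat.{u} R} {i₀ : ℤ} {M Q : Cx R} (π : M ⟶ Q)
    (Φ : disk R A₀ i₀ ⟶ M) (φ : A₀ ⟶ Q.X i₀) (hΦ : Φ ≫ π = diskHom R φ) :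
    (π.f i₀).hom ∘ₗ
      (eqToHom (diskX_eq R (Or.inl rfl)).symm ≫ Φ.f i₀ : A₀ ⟶ M.X i₀).hom = φ.hom := by
  have h := congrArg (fun (w : disk R A₀ i₀ ⟶ Q) => w.f i₀) hΦ
  simp only [HomologicalComplex.comp_f] at h
  have h2 : (diskHom R φ).f i₀ = eqToHom (diskX_eq R (Or.inl rfl)) ≫ φ := by
    simp [diskHom]; rfl
  rw [h2] at h
  have := congrArg (fun w => eqToHom (diskX_eq R (Or.inl (rfl : i₀ = i₀))).symm ≫ w) h
  simp only [← Category.assoc, eqToHom_trans, eqToHom_refl, Category.id_comp] at this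
  exact congrArg ModuleCat.Hom.hom this

end Aux5
section Aux6

variable {R : Type u} [Ring R]

lemma degreewisePure_of_cxPure {P M Q : Cx R} {ι : P ⟶ M} {π : M ⟶ Q}
    (hses : CxSES R ι π) (hcp : CxPure R ι π) : DegreewisePure R ι π := by
  intro i A _ _ hA
  refine ⟨?_, ?_, ?_⟩
  · intro f g hfg
    ext a
    exact (hses i).1 (LinearMap.congr_fun hfg a)
  · intro y
    constructor
    · intro hy
      obtain ⟨k, hk⟩ := exists_factor (hses i).1 (hses i).2.2 y hy
      exact ⟨k, hk⟩
    · rintro ⟨x, rfl⟩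
      ext a
      exact (hses i).2.2.apply_apply_eq_zero (x a)
  · intro φ
    obtain ⟨-, -, hsurj⟩ := hcp (disk R (ModuleCat.of R A) i)
      (disk_boundedFP R (ModuleCat.of R A) hA i)
    obtain ⟨Φ, hΦ⟩ := hsurj (diskHom R (ModuleCat.ofHom φ : ModuleCat.of R A ⟶ Q.X i))
    refine ⟨(eqToHom (diskX_eq R (Or.inl rfl)).symm ≫ Φ.f i :
      ModuleCat.of R A ⟶ M.X i).hom, ?_⟩
    exact diskHom_lift R π Φ _ hΦ

end Aux6
section Aux7

open HomologicalComplex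

variable {C : Type*} [Category C] [Abelian C] {S : ShortComplex (ChainComplex C ℤ)}

lemma quasiIso_g_of_exact (hS : S.ShortExact) (h : ∀ i, S.X₁.ExactAt i) :
    QuasiIso S.g := by
  refine ⟨fun i => ?_⟩
  rw [quasiIsoAt_iff_isIso_homologyMap]
  have hz : ∀ j, IsZero (S.X₁.homology j) :=
    fun j => (exactAt_iff_isZero_homology _ _).1 (h j)
  have hmono : Mono (homologyMap S.g i) :=
    (hS.homology_exact₂ i).mono_g ((hz i).eq_zero_of_src _)
  have hepi : Epi (homologyMap S.g i) :=
    (hS.homology_exact₃ i (i-1) (show i - 1 + 1 = i by omega)).epi_f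
      ((hz (i-1)).eq_zero_of_tgt _)
  exact isIso_of_mono_of_epi _

lemma exact_of_quasiIso_g (hS : S.ShortExact) [QuasiIso S.g] : ∀ i, S.X₁.ExactAt i := by
  intro i
  rw [exactAt_iff_isZero_homology]
  have hiso : ∀ j, IsIso (homologyMap S.g j) := fun j => by
    rw [← quasiIsoAt_iff_isIso_homologyMap]
    infer_instance
  have hδ : hS.δ (i+1) i rfl = 0 := by
    have := hiso (i+1)
    exact zero_of_epi_comp (homologyMap S.g (i+1)) (hS.comp_δ (i+1) i rfl)
  have hmono : Mono (homologyMap S.f i) :=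
    (hS.homology_exact₁ (i+1) i rfl).mono_g hδ
  have hf0 : homologyMap S.f i = 0 := by
    have := hiso i
    exact zero_of_comp_mono (homologyMap S.g i)
      (by rw [← homologyMap_comp, S.zero, homologyMap_zero])
  exact IsZero.of_mono_eq_zero _ hf0

lemma quasiIso_f_of_exact (hS : S.ShortExact) (h : ∀ i, S.X₃.ExactAt i) :
    QuasiIso S.f := by
  refine ⟨fun i => ?_⟩
  rw [quasiIsoAt_iff_isIso_homologyMap]
  have hz : ∀ j, IsZero (S.X₃.homology j) :=
    fun j => (exactAt_iff_isZero_homology _ _).1 (h j)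
  have hepi : Epi (homologyMap S.f i) :=
    (hS.homology_exact₂ i).epi_f ((hz i).eq_zero_of_tgt _)
  have hmono : Mono (homologyMap S.f i) :=
    (hS.homology_exact₁ (i+1) i rfl).mono_g ((hz (i+1)).eq_zero_of_src _)
  exact isIso_of_mono_of_epi _

lemma exact_of_quasiIso_f (hS : S.ShortExact) [QuasiIso S.f] : ∀ i, S.X₃.ExactAt i := by
  intro i
  rw [exactAt_iff_isZero_homology]
  have hiso : ∀ j, IsIso (homologyMap S.f j) := fun j => by
    rw [← quasiIsoAt_iff_isIso_homologyMap]
    infer_instance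
  have hg0 : homologyMap S.g i = 0 := by
    have := hiso i
    exact zero_of_epi_comp (homologyMap S.f i)
      (by rw [← homologyMap_comp, S.zero, homologyMap_zero])
  have hmono : Mono (hS.δ i (i-1) (show i - 1 + 1 = i by omega)) :=
    (hS.homology_exact₃ i (i-1) (show i - 1 + 1 = i by omega)).mono_g hg0
  have hδ0 : hS.δ i (i-1) (show i - 1 + 1 = i by omega) = 0 := by
    have := hiso (i-1)
    exact zero_of_comp_mono (homologyMap S.f (i-1))
      (hS.δ_comp i (i-1) (show i - 1 + 1 = i by omega))
  exact IsZero.of_mono_eq_zero _ hδ0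

end Aux7
section Aux8

open HomologicalComplex

variable {R : Type u} [Ring R]

/-- The functor `Hom(A, −)` on complexes. -/
noncomputable abbrev homF (A : ModuleCat.{u} R) :
    Cx R ⥤ HomologicalComplex AddCommGrpCat.{u} (ComplexShape.down ℤ) :=
  (preadditiveCoyoneda.obj (Opposite.op A)).mapHomologicalComplex (ComplexShape.down ℤ)

lemma homcx_exactAt_iff (A : ModuleCat.{u} R) (K : Cx R) (j : ℤ) :
    ((homF A).obj K).ExactAt j ↔
      ∀ g : A →ₗ[R] K.X j, (K.d j (j-1)).hom ∘ₗ g = 0 →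
        ∃ h : A →ₗ[R] K.X (j+1), (K.d (j+1) j).hom ∘ₗ h = g := by
  rw [HomologicalComplex.exactAt_iff' ((homF A).obj K) (j+1) j (j-1)
    (by rw [ChainComplex.prev]) (by rw [ChainComplex.next]),
    ShortComplex.ab_exact_iff]
  constructor
  · intro hE g hg
    obtain ⟨x, hx⟩ := hE (ModuleCat.ofHom g) (ModuleCat.hom_ext hg)
    exact ⟨x.hom, congrArg ModuleCat.Hom.hom hx⟩
  · intro hE g hg
    obtain ⟨h, hh⟩ := hE g.hom (congrArg ModuleCat.Hom.hom hg)
    exact ⟨ModuleCat.ofHom h, ModuleCat.hom_ext hh⟩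

lemma homSES_shortExact {L M N : Cx R} {α : L ⟶ M} {β : M ⟶ N} (hses : CxSES R α β)
    (hdp : DegreewisePure R α β) (A : ModuleCat.{u} R)
    (hA : Module.FinitePresentation R A) :
    (ShortComplex.mk ((homF A).map α) ((homF A).map β)
      (by rw [← Functor.map_comp, cxses_comp_zero hses, Functor.map_zero])).ShortExact := by
  apply HomologicalComplex.shortExact_of_degreewise_shortExact
  intro i
  obtain ⟨hinj, hex, hsurj⟩ := hdp i A hA
  have hmono : Mono ((ShortComplex.mk ((homF A).map α) ((homF A).map β)
      (by rw [← Functor.map_comp, cxses_comp_zero hses, Functor.map_zero])).map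
        (HomologicalComplex.eval _ _ i)).f :=
    (AddCommGrpCat.mono_iff_injective _).2 (fun x y hxy => ModuleCat.hom_ext (hinj (congrArg ModuleCat.Hom.hom hxy)))
  have hepi : Epi ((ShortComplex.mk ((homF A).map α) ((homF A).map β)
      (by rw [← Functor.map_comp, cxses_comp_zero hses, Functor.map_zero])).map
        (HomologicalComplex.eval _ _ i)).g :=
    (AddCommGrpCat.epi_iff_surjective _).2 (fun y => by
        obtain ⟨h, hh⟩ := hsurj y.hom
        exact ⟨ModuleCat.ofHom h, ModuleCat.hom_ext hh⟩)
  exact { exact := by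
            rw [ShortComplex.ab_exact_iff]
            intro x₂ hx₂
            obtain ⟨h, hh⟩ := (hex x₂.hom).1 (congrArg ModuleCat.Hom.hom hx₂)
            exact ⟨ModuleCat.ofHom h, ModuleCat.hom_ext hh⟩,
          mono_f := hmono,
          epi_g := hepi }

end Aux8
section Aux9

open HomologicalComplex

variable {R : Type u} [Ring R]

lemma pureAcyclic_left_iff {L M N : Cx R} {α : L ⟶ M} {β : M ⟶ N}
    (hses : CxSES R α β) (hdp : DegreewisePure R α β) :
    PureAcyclic R L ↔ PureQuasiIso R β := by
  constructor
  · intro hL A hA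
    have hS := homSES_shortExact hses hdp A hA
    have hEx : ∀ i, ((homF A).obj L).ExactAt i := fun i =>
      (homcx_exactAt_iff A L i).2 (fun g hg => pureAcyclic_homAc R hL A hA (i+1) i rfl g hg)
    exact quasiIso_g_of_exact hS hEx
  · intro hq
    apply homAc_pureAcyclic
    intro A _ _ hA i j hij
    obtain rfl : i = j + 1 := hij
    have hS := homSES_shortExact hses hdp (ModuleCat.of R A) hA
    haveI : QuasiIso ((ShortComplex.mk ((homF (ModuleCat.of R A)).map α)
        ((homF (ModuleCat.of R A)).map β)
        (by rw [← Functor.map_comp, cxses_comp_zero hses, Functor.map_zero])).g) :=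
      hq (ModuleCat.of R A) hA
    intro g hg
    exact (homcx_exactAt_iff (ModuleCat.of R A) L j).1 (exact_of_quasiIso_g hS j) g hg

lemma pureAcyclic_right_iff {L M N : Cx R} {α : L ⟶ M} {β : M ⟶ N}
    (hses : CxSES R α β) (hdp : DegreewisePure R α β) :
    PureAcyclic R N ↔ PureQuasiIso R α := by
  constructor
  · intro hN A hA
    have hS := homSES_shortExact hses hdp A hA
    have hEx : ∀ i, ((homF A).obj N).ExactAt i := fun i =>
      (homcx_exactAt_iff A N i).2 (fun g hg => pureAcyclic_homAc R hN A hA (i+1) i rfl g hg)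
    exact quasiIso_f_of_exact hS hEx
  · intro hq
    apply homAc_pureAcyclic
    intro A _ _ hA i j hij
    obtain rfl : i = j + 1 := hij
    have hS := homSES_shortExact hses hdp (ModuleCat.of R A) hA
    haveI : QuasiIso ((ShortComplex.mk ((homF (ModuleCat.of R A)).map α)
        ((homF (ModuleCat.of R A)).map β)
        (by rw [← Functor.map_comp, cxses_comp_zero hses, Functor.map_zero])).f) :=
      hq (ModuleCat.of R A) hA
    intro g hg
    exact (homcx_exactAt_iff (ModuleCat.of R A) N j).1 (exact_of_quasiIso_f hS j) g hg

end Aux9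

/-- Proposition 2.5: pure-acyclicity of the ends of a degreewise pure
short exact sequence of complexes versus pure quasi-isomorphisms; in particular a
pure-acyclic subcomplex is a pure subcomplex iff it is a degreewise pure subcomplex. -/
theorem statement2 :
    (∀ (L M N : Cx R) (α : L ⟶ M) (β : M ⟶ N), CxSES R α β → DegreewisePure R α β →
      ((PureAcyclic R L ↔ PureQuasiIso R β) ∧
       (PureAcyclic R N ↔ PureQuasiIso R α) ∧
       ((PureAcyclic R L ∨ PureAcyclic R N) → CxPure R α β))) ∧
    (∀ (P M Q : Cx R) (ι : P ⟶ M) (π : M ⟶ Q), CxSES R ι π → PureAcyclic R P →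
      (CxPure R ι π ↔ DegreewisePure R ι π)) := by
  constructor
  · intro L M N α β hses hdp
    exact ⟨pureAcyclic_left_iff hses hdp, pureAcyclic_right_iff hses hdp,
      fun hp => cxpure_of_pureAcyclic hses hdp hp⟩
  · intro P M Q ι π hses hP
    constructor
    · intro hcp
      exact degreewisePure_of_cxPure hses hcp
    · intro hdp
      exact cxpure_of_pureAcyclic hses hdp (Or.inl hP)

end PaperPM
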